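/- Symmetric Zhong principle. In the abstract symmetrization framework, let X be a Banach space and let η : [0,+∞) → [0,+∞) be nondecreasing and continuous with ∫₀^{+∞} ds/(1+η(s)) = +∞. Assume that for some ρ₀ > 0 there is a function r : [0,ρ₀) → [0,+∞) with ∫₀^{r(ρ)} ds/(1+η(s)) ≥ ρ for all ρ ∈ (0,ρ₀) and r(ρ) → 0 as ρ → 0⁺. Let f : X → ℝ ∪ {+∞} be a proper, bounded below, lower semicontinuous functional such that f(u^H) ≤ f(u) for all u ∈ S and all H ∈ ℋ*. Let u ∈ S, ρ ∈ (0,ρ₀) and σ > 0 satisfy f(u) < inf_X f + σρ. Then there exists v ∈ X such that: (a) ‖v − v*‖_V < (K(C_Θ+1)+1)r(ρ); (b) f(v) ≤ f(u); (c) ‖v − u‖ ≤ r(ρ) + ‖T_{r(ρ)} u − u‖; (d) f(w) ≥ f(v) − σ‖w − v‖/(1 + η(‖v − T_{r(ρ)} u‖)) for all w ∈ X. -/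

import Mathlib

open Filter Topology Metric Set

lemma zhong_core {X : Type*} [NormedAddCommGroup X] [CompleteSpace X]
    (η : ℝ → ℝ) (hηnonneg : ∀ s : ℝ, 0 ≤ s → 0 ≤ η s)
    (hηmono : MonotoneOn η (Set.Ici 0)) (hηcont : ContinuousOn η (Set.Ici 0))
    (σ ρ R : ℝ) (hσ : 0 < σ) (hρ : 0 < ρ) (hR : 0 ≤ R)
    (hint : ρ ≤ ∫ s in (0:ℝ)..R, 1 / (1 + η s))
    (g : X → ℝ) (c : ℝ) (hgc : ∀ x, c ≤ g x) (hg : LowerSemicontinuous g)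
    (x₀ : X) (hx₀ : ∀ w, g x₀ < g w + σ * ρ) :
    ∃ v : X, ‖v - x₀‖ ≤ R ∧ g v ≤ g x₀ ∧
      ∀ w : X, g v - σ * ‖w - v‖ / (1 + η ‖v - x₀‖) ≤ g w := by
  -- basic facts about the integrand
  set ψ : ℝ → ℝ := fun s => 1 / (1 + η s) with hψ
  have hηpos : ∀ s : ℝ, 0 ≤ s → (0:ℝ) < 1 + η s := fun s hs => by
    have := hηnonneg s hs; linarith
  have hψcont : ContinuousOn ψ (Set.Ici 0) := by
    apply ContinuousOn.div continuousOn_const (continuousOn_const.add hηcont)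
    intro s hs; exact ne_of_gt (hηpos s hs)
  have hψint : ∀ a b : ℝ, 0 ≤ a → 0 ≤ b → IntervalIntegrable ψ MeasureTheory.volume a b := by
    intro a b ha hb
    apply ContinuousOn.intervalIntegrable
    apply hψcont.mono
    intro x hx
    exact le_trans (le_min ha hb) hx.1
  set φ : ℝ → ℝ := fun t => ∫ s in (0:ℝ)..t, ψ s with hφ
  have hφmono : ∀ x y : ℝ, 0 ≤ x → x ≤ y → φ x ≤ φ y := by
    intro x y hx hxy
    have h1 : φ y = φ x + ∫ s in x..y, ψ s := by
      rw [hφ]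
      exact (intervalIntegral.integral_add_adjacent_intervals (hψint 0 x le_rfl hx)
        (hψint x y hx (hx.trans hxy))).symm
    have h2 : (0:ℝ) ≤ ∫ s in x..y, ψ s := by
      apply intervalIntegral.integral_nonneg hxy
      intro s hs
      exact le_of_lt (by
        have : (0:ℝ) < 1 + η s := hηpos s (hx.trans hs.1)
        positivity)
    linarith
  have hφstep : ∀ a d : ℝ, 0 ≤ a → 0 ≤ d → φ (a + d) ≤ φ a + d * ψ a := by
    intro a d ha hd
    have h1 : φ (a + d) = φ a + ∫ s in a..(a + d), ψ s := by
      rw [hφ]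
      exact (intervalIntegral.integral_add_adjacent_intervals (hψint 0 a le_rfl ha)
        (hψint a (a+d) ha (by linarith))).symm
    have h2 : (∫ s in a..(a + d), ψ s) ≤ ∫ s in a..(a + d), ψ a := by
      apply intervalIntegral.integral_mono_on (by linarith) (hψint a (a+d) ha (by linarith))
        (intervalIntegrable_const)
      intro s hs
      have hs0 : 0 ≤ s := ha.trans hs.1
      have := hηmono (mem_Ici.mpr ha) (mem_Ici.mpr hs0) hs.1
      exact one_div_le_one_div_of_le (hηpos a ha) (by linarith)
    have h3 : (∫ s in a..(a + d), ψ a) = d * ψ a := by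
      simp [intervalIntegral.integral_const, smul_eq_mul]
    linarith
  -- the iteration
  set wgt : X → ℝ := fun z => σ / (1 + η ‖z - x₀‖) with hwgt
  set Tset : X → Set X := fun z => {w | g w + wgt z * ‖w - z‖ ≤ g z} with hTset
  have hz_mem : ∀ z : X, z ∈ Tset z := by
    intro z; simp [hTset]
  have hbdd : ∀ z : X, BddBelow (g '' Tset z) := by
    intro z
    refine ⟨c, ?_⟩
    rintro y ⟨x, -, rfl⟩
    exact hgc x
  have hchoice : ∀ z : X, ∀ n : ℕ, ∃ w, w ∈ Tset z ∧ g w < sInf (g '' Tset z) + (1/2)^n := by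
    intro z n
    have hne : (g '' Tset z).Nonempty := ⟨g z, z, hz_mem z, rfl⟩
    obtain ⟨y, ⟨x, hx, rfl⟩, hy⟩ := Real.lt_sInf_add_pos hne
      (by positivity : (0:ℝ) < (1/2:ℝ)^n)
    exact ⟨x, hx, hy⟩
  choose F hF1 hF2 using hchoice
  let z : ℕ → X := fun n => Nat.rec x₀ (fun n zn => F zn n) n
  have hz0 : z 0 = x₀ := rfl
  have hzs : ∀ n, z (n+1) = F (z n) n := fun n => rfl
  have hmem : ∀ n, z (n+1) ∈ Tset (z n) := fun n => by rw [hzs]; exact hF1 _ _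
  have hnear : ∀ n, g (z (n+1)) < sInf (g '' Tset (z n)) + (1/2)^n := fun n => by
    rw [hzs]; exact hF2 _ _
  set a : ℕ → ℝ := fun n => ‖z n - x₀‖ with ha
  set D : ℕ → ℝ := fun n => ‖z (n+1) - z n‖ with hD
  have ha0 : ∀ n, 0 ≤ a n := fun n => norm_nonneg _
  have hwgtval : ∀ n, wgt (z n) = σ * ψ (a n) := by
    intro n; rw [hwgt, hψ]; simp [ha]; ring
  have hwgtpos : ∀ n, 0 < wgt (z n) := by
    intro n; rw [hwgt]
    exact div_pos hσ (hηpos _ (norm_nonneg _))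
  have hstep : ∀ n, g (z (n+1)) + wgt (z n) * D n ≤ g (z n) := fun n => hmem n
  have hganti : ∀ n, g (z (n+1)) ≤ g (z n) := by
    intro n
    have h1 := hstep n
    have h2 : 0 ≤ wgt (z n) * D n := mul_nonneg (hwgtpos n).le (norm_nonneg _)
    linarith
  have hgantiFull : Antitone (fun n => g (z n)) :=
    antitone_nat_of_succ_le hganti
  have hsum : ∀ n, σ * (∑ i ∈ Finset.range n, D i * ψ (a i)) ≤ g (z 0) - g (z n) := by
    intro n
    induction n with
    | zero => simp
    | succ n ih =>
      rw [Finset.sum_range_succ]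
      have h1 := hstep n
      rw [hwgtval n] at h1
      have : σ * (D n * ψ (a n)) ≤ g (z n) - g (z (n+1)) := by linarith [h1]; 
      rw [mul_add]
      linarith
  have hsumlt : ∀ n, ∑ i ∈ Finset.range n, D i * ψ (a i) < ρ := by
    intro n
    have h1 := hsum n
    have h2 := hx₀ (z n)
    rw [hz0] at h1
    nlinarith [hσ]
  have hphia : ∀ n, φ (a n) ≤ ∑ i ∈ Finset.range n, D i * ψ (a i) := by
    intro n
    induction n with
    | zero =>
      simp [ha, hz0, hφ]
    | succ n ih =>
      have h1 : a (n+1) ≤ a n + D n := by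
        rw [ha, hD]
        calc ‖z (n+1) - x₀‖ ≤ ‖z (n+1) - z n‖ + ‖z n - x₀‖ := norm_sub_le_norm_sub_add_norm_sub _ _ _
        _ = ‖z n - x₀‖ + ‖z (n+1) - z n‖ := by ring
      have h2 : φ (a (n+1)) ≤ φ (a n + D n) :=
        hφmono (a (n+1)) (a n + D n) (ha0 (n+1)) h1
      have h3 := hφstep (a n) (D n) (ha0 n) (norm_nonneg _)
      rw [Finset.sum_range_succ]
      linarith
  have haR : ∀ n, a n ≤ R := by
    intro n
    by_contra hc
    push_neg at hc
    have h1 : φ R ≤ φ (a n) := hφmono R (a n) hR hc.le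
    have h2 : φ (a n) < ρ := lt_of_le_of_lt (hphia n) (hsumlt n)
    have : φ R = ∫ s in (0:ℝ)..R, 1 / (1 + η s) := rfl
    rw [this] at h1
    linarith
  -- lower bound on weights, Cauchy
  set w₀ : ℝ := σ / (1 + η R) with hw₀
  have hw₀pos : 0 < w₀ := div_pos hσ (hηpos R hR)
  have hwgtlb : ∀ n, w₀ ≤ wgt (z n) := by
    intro n
    rw [hwgt, hw₀]
    apply div_le_div_of_nonneg_left hσ.le (hηpos _ (norm_nonneg _))
    have := hηmono (mem_Ici.mpr (ha0 n)) (mem_Ici.mpr hR) (haR n)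
    linarith
  have hsumD : ∀ n, ∑ i ∈ Finset.range n, D i ≤ (g (z 0) - c) / w₀ := by
    intro n
    have h1 : w₀ * ∑ i ∈ Finset.range n, D i ≤ ∑ i ∈ Finset.range n, wgt (z i) * D i := by
      rw [Finset.mul_sum]
      apply Finset.sum_le_sum
      intro i _
      exact mul_le_mul_of_nonneg_right (hwgtlb i) (norm_nonneg _)
    have h2 : ∑ i ∈ Finset.range n, wgt (z i) * D i ≤ g (z 0) - g (z n) := by
      have := hsum n
      calc ∑ i ∈ Finset.range n, wgt (z i) * D i
          = σ * ∑ i ∈ Finset.range n, D i * ψ (a i) := by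
            rw [Finset.mul_sum]; apply Finset.sum_congr rfl; intro i _; rw [hwgtval i]; ring
        _ ≤ g (z 0) - g (z n) := hsum n
    have h3 : c ≤ g (z n) := hgc _
    rw [le_div_iff₀ hw₀pos, mul_comm]
    linarith
  have hsummable : Summable D :=
    summable_of_sum_range_le (fun n => norm_nonneg _) hsumD
  have hcauchy : CauchySeq z := by
    apply cauchySeq_of_summable_dist
    convert hsummable using 2 with n
    rw [dist_eq_norm, hD, norm_sub_rev]
  obtain ⟨v, hv⟩ := cauchySeq_tendsto_of_complete hcauchy
  -- limit facts
  have havlim : Tendsto a atTop (𝓝 ‖v - x₀‖) := by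
    exact ((hv.sub_const x₀).norm)
  have hvR : ‖v - x₀‖ ≤ R := le_of_tendsto havlim (Eventually.of_forall haR)
  set ℓ : ℝ := ⨅ n, g (z n) with hℓ
  have hbddg : BddBelow (Set.range fun n => g (z n)) := ⟨c, fun y ⟨n, hn⟩ => hn ▸ hgc _⟩
  have hglim : Tendsto (fun n => g (z n)) atTop (𝓝 ℓ) :=
    tendsto_atTop_ciInf hgantiFull hbddg
  have hℓle : ∀ n, ℓ ≤ g (z n) := fun n => ciInf_le hbddg n
  have hgvℓ : g v ≤ ℓ := by
    by_contra hc
    push_neg at hc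
    obtain ⟨y, hy1, hy2⟩ := exists_between hc
    have h1 : ∀ᶠ n in atTop, y < g (z n) := hv.eventually (hg v y hy2)
    have h2 : ∀ᶠ n in atTop, g (z n) < y := hglim.eventually_lt_const hy1
    obtain ⟨n, hn1, hn2⟩ := (h1.and h2).exists
    linarith
  have hgvx₀ : g v ≤ g x₀ := le_trans hgvℓ (by rw [← hz0]; exact hℓle 0)
  refine ⟨v, hvR, hgvx₀, ?_⟩
  intro w
  by_contra hc
  push_neg at hc
  set s : ℝ := σ / (1 + η ‖v - x₀‖) with hs
  have hspos : 0 < s := div_pos hσ (hηpos _ (norm_nonneg _))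
  have hcw : g w < g v - s * ‖w - v‖ := by
    rw [hs]
    calc g w < g v - σ * ‖w - v‖ / (1 + η ‖v - x₀‖) := hc
    _ = g v - σ / (1 + η ‖v - x₀‖) * ‖w - v‖ := by ring
  set γ : ℝ := g v - s * ‖w - v‖ - g w with hγ
  have hγpos : 0 < γ := by rw [hγ]; linarith
  -- wn → s and ‖w - z n‖ → ‖w - v‖
  have haInIci : ∀ n, a n ∈ Set.Ici (0:ℝ) := fun n => ha0 n
  have havlim' : Tendsto a atTop (𝓝[Set.Ici 0] ‖v - x₀‖) :=
    tendsto_nhdsWithin_of_tendsto_nhds_of_eventually_within _ havlim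
      (Eventually.of_forall haInIci)
  have hηlim : Tendsto (fun n => η (a n)) atTop (𝓝 (η ‖v - x₀‖)) :=
    (hηcont _ (mem_Ici.mpr (norm_nonneg _))).tendsto.comp havlim'
  have hwlim : Tendsto (fun n => wgt (z n)) atTop (𝓝 s) := by
    rw [hs]
    have : (fun n => wgt (z n)) = fun n => σ / (1 + η (a n)) := by
      funext n; rw [hwgt]
    rw [this]
    exact tendsto_const_nhds.div (tendsto_const_nhds.add hηlim)
      (ne_of_gt (hηpos _ (norm_nonneg _)))
  have hnwlim : Tendsto (fun n => ‖w - z n‖) atTop (𝓝 ‖w - v‖) :=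
    ((tendsto_const_nhds.sub hv).norm)
  have hprodlim : Tendsto (fun n => wgt (z n) * ‖w - z n‖) atTop (𝓝 (s * ‖w - v‖)) :=
    hwlim.mul hnwlim
  have hev1 : ∀ᶠ n in atTop, wgt (z n) * ‖w - z n‖ < s * ‖w - v‖ + γ :=
    hprodlim.eventually_lt_const (by linarith)
  have hev2 : ∀ᶠ n : ℕ in atTop, w ∈ Tset (z n) := by
    filter_upwards [hev1] with n hn
    show g w + wgt (z n) * ‖w - z n‖ ≤ g (z n)
    have h1 : g w + wgt (z n) * ‖w - z n‖ < g w + (s * ‖w - v‖ + γ) := by linarith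
    have h2 : g w + (s * ‖w - v‖ + γ) = g v := by rw [hγ]; ring
    have h3 : g v ≤ g (z n) := le_trans hgvℓ (hℓle n)
    linarith
  have hℓw : ℓ ≤ g w := by
    by_contra hc2
    push_neg at hc2
    have hev3 : ∀ᶠ n : ℕ in atTop, ((1:ℝ)/2)^n < ℓ - g w := by
      have : Tendsto (fun n : ℕ => ((1:ℝ)/2)^n) atTop (𝓝 0) := by
        apply tendsto_pow_atTop_nhds_zero_of_lt_one <;> norm_num
      exact this.eventually_lt_const (by linarith)
    obtain ⟨n, hn1, hn2⟩ := (hev2.and hev3).exists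
    have h1 : sInf (g '' Tset (z n)) ≤ g w := csInf_le (hbdd _) ⟨w, hn1, rfl⟩
    have h2 := hnear n
    have h3 := hℓle (n+1)
    linarith
  have : g w < g w := by
    calc g w < g v - s * ‖w - v‖ := hcw
    _ ≤ g v := by nlinarith [norm_nonneg (w - v)]
    _ ≤ ℓ := hgvℓ
    _ ≤ g w := hℓw
  exact absurd this (lt_irrefl _)

theorem symmetric_zhong
    {X : Type*} [NormedAddCommGroup X] [NormedSpace ℝ X] [CompleteSpace X]
    {V : Type*} [NormedAddCommGroup V] [NormedSpace ℝ V] [CompleteSpace V]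
    {W : Type*} [NormedAddCommGroup W] [NormedSpace ℝ W] [CompleteSpace W]
    (ι : X →L[ℝ] V) (κ : V →L[ℝ] W)
    (K : ℝ) (hK : 0 < K) (hιK : ∀ u : X, ‖ι u‖ ≤ K * ‖u‖)
    (S : Set X)
    {P : Type*} [TopologicalSpace P] [PathConnectedSpace P]
    (pol : X → P → X) (sy : X → X)
    (hpolS : ∀ u ∈ S, ∀ H : P, pol u H ∈ S)
    (hsyS : ∀ u : X, sy u ∈ S)
    (hpolCont : ContinuousOn (fun q : X × P => pol q.1 q.2) (S ×ˢ Set.univ))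
    (hsypol : ∀ u ∈ S, ∀ H : P,
      pol (sy u) H = sy u ∧ sy (pol u H) = sy u ∧ pol (pol u H) H = pol u H)
    (happrox : ∃ Hs : ℕ → P, ∀ u ∈ S,
      Filter.Tendsto (fun m => ι (List.foldl pol u ((List.range m).map Hs)))
        Filter.atTop (nhds (ι (sy u))))
    (hpolContr : ∀ u ∈ S, ∀ v ∈ S, ∀ H : P, ‖ι (pol u H) - ι (pol v H)‖ ≤ ‖ι u - ι v‖)
    (Θ : X → X) (CΘ : ℝ) (hCΘ : 0 < CΘ)
    (hΘS : ∀ u : X, Θ u ∈ S) (hΘid : ∀ u ∈ S, Θ u = u)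
    (hΘlip : ∀ u v : X, ‖ι (Θ u) - ι (Θ v)‖ ≤ CΘ * ‖ι u - ι v‖)
    (hpolext : ∀ u : X, ∀ H : P, pol u H = pol (Θ u) H)
    (hsyext : ∀ u : X, sy u = sy (Θ u))
    (T : ℝ → X → X)
    (hTS : ∀ ρ > (0:ℝ), ∀ u ∈ S, T ρ u ∈ S)
    (hTpol : ∀ ρ > (0:ℝ), ∀ u ∈ S, ∃ l : List P, T ρ u = List.foldl pol u l)
    (hTsy : ∀ ρ > (0:ℝ), ∀ u ∈ S, sy (T ρ u) = sy u)
    (hTapprox : ∀ ρ > (0:ℝ), ∀ u ∈ S, ‖ι (T ρ u) - ι (sy u)‖ < ρ)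
    (η : ℝ → ℝ) (hηnonneg : ∀ s : ℝ, 0 ≤ s → 0 ≤ η s)
    (hηmono : MonotoneOn η (Set.Ici 0)) (hηcont : ContinuousOn η (Set.Ici 0))
    (hηdiv : Filter.Tendsto (fun R : ℝ => ∫ s in (0:ℝ)..R, 1 / (1 + η s))
      Filter.atTop Filter.atTop)
    (ρ₀ : ℝ) (hρ₀ : 0 < ρ₀) (r : ℝ → ℝ) (hrnonneg : ∀ ρ ∈ Set.Ico (0:ℝ) ρ₀, 0 ≤ r ρ)
    (hrint : ∀ ρ ∈ Set.Ioo (0:ℝ) ρ₀, ρ ≤ ∫ s in (0:ℝ)..(r ρ), 1 / (1 + η s))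
    (hrlim : Filter.Tendsto r (nhdsWithin 0 (Set.Ioi 0)) (nhds 0))
    (f : X → EReal)
    (hfproper : ∃ u, f u ≠ ⊤)
    (hfbdd : ∃ c : ℝ, ∀ u, (c : EReal) ≤ f u)
    (hflsc : LowerSemicontinuous f)
    (hfpol : ∀ u ∈ S, ∀ H : P, f (pol u H) ≤ f u)
    (u : X) (hu : u ∈ S) (ρ σ : ℝ) (hρ : ρ ∈ Set.Ioo 0 ρ₀) (hσ : 0 < σ)
    (hfu : f u < (⨅ w, f w) + ((σ * ρ : ℝ) : EReal)) :
    ∃ v : X,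
      ‖ι v - ι (sy v)‖ < (K * (CΘ + 1) + 1) * r ρ ∧
      f v ≤ f u ∧
      ‖v - u‖ ≤ r ρ + ‖T (r ρ) u - u‖ ∧
      (∀ w : X, f v - ((σ * ‖w - v‖ / (1 + η ‖v - T (r ρ) u‖) : ℝ) : EReal) ≤ f w) := by
  obtain ⟨c, hc⟩ := hfbdd
  obtain ⟨hρpos, hρlt⟩ := hρ
  set R : ℝ := r ρ with hRdef
  have hRnn : 0 ≤ R := hrnonneg ρ ⟨hρpos.le, hρlt⟩
  have hint : ρ ≤ ∫ s in (0:ℝ)..R, 1 / (1 + η s) := hrint ρ ⟨hρpos, hρlt⟩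
  have hRpos : 0 < R := by
    rcases lt_or_eq_of_le hRnn with h | h
    · exact h
    · exfalso
      rw [← h] at hint
      rw [intervalIntegral.integral_same] at hint
      linarith
  set x₀ : X := T R u with hx₀def
  have hx₀S : x₀ ∈ S := hTS R hRpos u hu
  -- f decreases along polarizations
  have hfold : ∀ (l : List P) (x : X), x ∈ S →
      List.foldl pol x l ∈ S ∧ f (List.foldl pol x l) ≤ f x := by
    intro l
    induction l with
    | nil => intro x hx; exact ⟨hx, le_refl _⟩
    | cons H t ih =>
      intro x hx
      have h1 := hpolS x hx H
      obtain ⟨m1, m2⟩ := ih (pol x H) h1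
      exact ⟨m1, le_trans m2 (hfpol x hx H)⟩
  have hfx₀u : f x₀ ≤ f u := by
    obtain ⟨l, hl⟩ := hTpol R hRpos u hu
    rw [hx₀def, hl]
    exact (hfold l u hu).2
  -- finiteness of f u
  have hfu_top : f u ≠ ⊤ := (lt_of_lt_of_le hfu le_top).ne
  have hfu_bot : f u ≠ ⊥ := by
    intro h
    have := hc u
    rw [h, le_bot_iff] at this
    exact EReal.coe_ne_bot c this
  set M : ℝ := (f u).toReal + 1 with hMdef
  have hfuM : f u < (M : EReal) := by
    have h1 : f u = (((f u).toReal : ℝ) : EReal) := (EReal.coe_toReal hfu_top hfu_bot).symm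
    rw [h1]
    exact_mod_cast lt_add_one _
  -- the truncated real functional
  set g : X → ℝ := fun x => (f x ⊓ (M : EReal)).toReal with hgdef
  have htop : ∀ x : X, f x ⊓ (M : EReal) ≠ ⊤ :=
    fun x => ((min_le_right _ _).trans_lt (EReal.coe_lt_top M)).ne
  have hbot : ∀ x : X, f x ⊓ (M : EReal) ≠ ⊥ := by
    intro x
    have h1 : (⊥ : EReal) < f x := lt_of_lt_of_le (EReal.bot_lt_coe c) (hc x)
    exact (lt_min h1 (EReal.bot_lt_coe M)).ne'
  have coe_g : ∀ x : X, ((g x : ℝ) : EReal) = f x ⊓ (M : EReal) :=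
    fun x => EReal.coe_toReal (htop x) (hbot x)
  set c₀ : ℝ := min c M with hc₀def
  have hgc : ∀ x : X, c₀ ≤ g x := by
    intro x
    have h1 : ((c₀ : ℝ) : EReal) ≤ f x ⊓ (M : EReal) := by
      apply le_min
      · exact le_trans (by exact_mod_cast min_le_left c M) (hc x)
      · exact_mod_cast min_le_right c M
    rw [← coe_g x] at h1
    exact_mod_cast h1
  have hglsc : LowerSemicontinuous g := by
    intro x y hy
    have h1 : ((y : ℝ) : EReal) < f x ⊓ (M : EReal) := by
      rw [← coe_g x]; exact_mod_cast hy
    have h2 : (y : EReal) < f x := h1.trans_le (min_le_left _ _)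
    have h3 : ((y : ℝ) : EReal) < (M : EReal) := h1.trans_le (min_le_right _ _)
    filter_upwards [hflsc x _ h2] with x' hx'
    have h4 : ((y : ℝ) : EReal) < f x' ⊓ (M : EReal) := lt_min hx' h3
    rw [← coe_g x'] at h4
    exact_mod_cast h4
  have hgx₀ : ∀ w : X, g x₀ < g w + σ * ρ := by
    intro w
    have key : ((g x₀ : ℝ) : EReal) < ((g w : ℝ) : EReal) + ((σ * ρ : ℝ) : EReal) := by
      rw [coe_g x₀, coe_g w]
      have hfx₀M : f x₀ ⊓ (M : EReal) = f x₀ := min_eq_left (hfx₀u.trans hfuM.le)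
      rw [hfx₀M]
      rcases le_total (f w) ((M : ℝ) : EReal) with h | h
      · rw [min_eq_left h]
        calc f x₀ ≤ f u := hfx₀u
          _ < (⨅ w', f w') + ((σ * ρ : ℝ) : EReal) := hfu
          _ ≤ f w + ((σ * ρ : ℝ) : EReal) := add_le_add_left (iInf_le _ w) _
      · rw [min_eq_right h]
        calc f x₀ ≤ f u := hfx₀u
          _ < ((M : ℝ) : EReal) := hfuM
          _ ≤ ((M : ℝ) : EReal) + ((σ * ρ : ℝ) : EReal) :=
              le_add_of_nonneg_right (by exact_mod_cast (mul_pos hσ hρpos).le)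
    exact_mod_cast key
  obtain ⟨v, hv1, hv2, hv3⟩ :=
    zhong_core η hηnonneg hηmono hηcont σ ρ R hσ hρpos hRnn hint g c₀ hgc hglsc x₀ hgx₀
  -- recover f-level facts
  have h1 : f v ⊓ (M : EReal) ≤ f x₀ := by
    have h := EReal.coe_le_coe_iff.mpr hv2
    rw [coe_g, coe_g] at h
    rw [min_eq_left (hfx₀u.trans hfuM.le)] at h
    exact h
  have hfvu : f v ≤ f u := by
    rcases le_total (f v) ((M : ℝ) : EReal) with h | h
    · rw [min_eq_left h] at h1
      exact h1.trans hfx₀u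
    · exfalso
      rw [min_eq_right h] at h1
      exact absurd (h1.trans hfx₀u) (not_le.mpr hfuM)
  have coe_fv : ((g v : ℝ) : EReal) = f v := by
    rw [coe_g, min_eq_left (hfvu.trans hfuM.le)]
  -- symmetrization contraction
  obtain ⟨Hs, hHs⟩ := happrox
  have hiter : ∀ aa ∈ S, ∀ bb ∈ S, ∀ m : ℕ,
      (List.foldl pol aa ((List.range m).map Hs)) ∈ S ∧
      (List.foldl pol bb ((List.range m).map Hs)) ∈ S ∧
      ‖ι (List.foldl pol aa ((List.range m).map Hs)) -
        ι (List.foldl pol bb ((List.range m).map Hs))‖ ≤ ‖ι aa - ι bb‖ := by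
    intro aa ha bb hb m
    induction m with
    | zero =>
      refine ⟨?_, ?_, ?_⟩ <;> simpa using by first | exact ha | exact hb | exact le_refl _
    | succ m ih =>
      obtain ⟨h1, h2, h3⟩ := ih
      simp only [List.range_succ, List.map_append, List.foldl_append, List.map_cons,
        List.map_nil, List.foldl_cons, List.foldl_nil]
      exact ⟨hpolS _ h1 _, hpolS _ h2 _, le_trans (hpolContr _ h1 _ h2 _) h3⟩
  have hsyContr : ∀ aa ∈ S, ∀ bb ∈ S, ‖ι (sy aa) - ι (sy bb)‖ ≤ ‖ι aa - ι bb‖ := by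
    intro aa ha bb hb
    have hta := hHs aa ha
    have htb := hHs bb hb
    have hlim : Filter.Tendsto (fun m => ‖ι (List.foldl pol aa ((List.range m).map Hs)) -
        ι (List.foldl pol bb ((List.range m).map Hs))‖) Filter.atTop
        (nhds ‖ι (sy aa) - ι (sy bb)‖) := (hta.sub htb).norm
    exact le_of_tendsto hlim (Filter.Eventually.of_forall fun m => (hiter aa ha bb hb m).2.2)
  -- assemble
  have hTa : ‖ι x₀ - ι (sy u)‖ < R := hTapprox R hRpos u hu
  have hsyx₀ : sy x₀ = sy u := hTsy R hRpos u hu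
  have hvx₀V : ‖ι v - ι x₀‖ ≤ K * R := by
    have h := hιK (v - x₀)
    rw [map_sub] at h
    exact h.trans (mul_le_mul_of_nonneg_left hv1 hK.le)
  have hsyuv : ‖ι (sy u) - ι (sy v)‖ ≤ CΘ * (K * R) := by
    rw [hsyext v, ← hsyx₀]
    calc ‖ι (sy x₀) - ι (sy (Θ v))‖ ≤ ‖ι x₀ - ι (Θ v)‖ :=
          hsyContr x₀ hx₀S (Θ v) (hΘS v)
      _ = ‖ι (Θ x₀) - ι (Θ v)‖ := by rw [hΘid x₀ hx₀S]
      _ ≤ CΘ * ‖ι x₀ - ι v‖ := hΘlip x₀ v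
      _ ≤ CΘ * (K * R) := by
          apply mul_le_mul_of_nonneg_left _ hCΘ.le
          calc ‖ι x₀ - ι v‖ = ‖ι v - ι x₀‖ := by rw [← norm_neg, neg_sub]
            _ ≤ K * R := by
                have h := hιK (v - x₀)
                rw [map_sub] at h
                exact h.trans (mul_le_mul_of_nonneg_left hv1 hK.le)
  refine ⟨v, ?_, hfvu, ?_, ?_⟩
  · calc ‖ι v - ι (sy v)‖
        ≤ ‖ι v - ι x₀‖ + ‖ι x₀ - ι (sy u)‖ + ‖ι (sy u) - ι (sy v)‖ := by
          have t1 : ι v - ι (sy v) = (ι v - ι x₀) + (ι x₀ - ι (sy u)) + (ι (sy u) - ι (sy v)) := by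
            abel
          rw [t1]
          exact (norm_add_le _ _).trans (add_le_add_left (norm_add_le _ _) _)
      _ < K * R + R + CΘ * (K * R) := by
          have := hvx₀V; have := hsyuv; linarith
      _ = (K * (CΘ + 1) + 1) * R := by ring
  · calc ‖v - u‖ ≤ ‖v - x₀‖ + ‖x₀ - u‖ := norm_sub_le_norm_sub_add_norm_sub v x₀ u
      _ ≤ R + ‖x₀ - u‖ := add_le_add_left hv1 _
  · intro w
    set p : ℝ := σ * ‖w - v‖ / (1 + η ‖v - x₀‖) with hpdef
    have hcore : g v - p ≤ g w := hv3 w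
    have heq : f v - ((p : ℝ) : EReal) = (((g v - p : ℝ)) : EReal) := by
      rw [EReal.coe_sub, coe_fv]
    rw [heq]
    calc (((g v - p : ℝ)) : EReal) ≤ ((g w : ℝ) : EReal) := EReal.coe_le_coe_iff.mpr hcore
      _ = f w ⊓ (M : EReal) := coe_g w
      _ ≤ f w := min_le_left _ _
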